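/- For any itemset X contained in at least one transaction, RTWU(X) ≥ u(X); i.e., the redefined transaction-weighted utility (summing only positive-utility items over all transactions containing X) is an upper bound on the actual utility of X. -/
import Mathlib


open Finset

def utilT {α ι : Type} (pr : α → ℤ) (q : α → ι → ℕ) (X : Finset α) (t : ι) : ℤ :=
  ∑ i ∈ X, pr i * (q i t : ℤ)

def totU {α ι : Type} [DecidableEq α] (D : Finset ι) (Trans : ι → Finset α)
    (pr : α → ℤ) (q : α → ι → ℕ) (X : Finset α) : ℤ :=
  ∑ t ∈ D.filter (fun t => X ⊆ Trans t), utilT pr q X t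

/-- Redefined transaction utility: sum of positive-utility items of the transaction. -/
def RTU {α ι : Type} [DecidableEq α] (Trans : ι → Finset α)
    (pr : α → ℤ) (q : α → ι → ℕ) (t : ι) : ℤ :=
  ∑ i ∈ (Trans t).filter (fun i => 0 < pr i), pr i * (q i t : ℤ)

def RTWU {α ι : Type} [DecidableEq α] (D : Finset ι) (Trans : ι → Finset α)
    (pr : α → ℤ) (q : α → ι → ℕ) (X : Finset α) : ℤ :=
  ∑ t ∈ D.filter (fun t => X ⊆ Trans t), RTU Trans pr q t

theorem stmt2 {α ι : Type} [DecidableEq α] (D : Finset ι) (Trans : ι → Finset α)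
    (pr : α → ℤ) (q : α → ι → ℕ) (hq : ∀ i t, 0 < q i t) (X : Finset α)
    (hX : ∃ t ∈ D, X ⊆ Trans t) :
    totU D Trans pr q X ≤ RTWU D Trans pr q X := by
  unfold totU RTWU
  apply Finset.sum_le_sum
  intro t ht
  rw [Finset.mem_filter] at ht
  unfold utilT RTU
  calc ∑ i ∈ X, pr i * (q i t : ℤ)
      ≤ ∑ i ∈ X.filter (fun i => 0 < pr i), pr i * (q i t : ℤ) := by
        rw [← Finset.sum_filter_add_sum_filter_not X (fun i => 0 < pr i)]
        have : ∑ i ∈ X.filter (fun i => ¬ 0 < pr i), pr i * (q i t : ℤ) ≤ 0 := by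
          apply Finset.sum_nonpos
          intro i hi
          rw [Finset.mem_filter] at hi
          exact mul_nonpos_of_nonpos_of_nonneg (le_of_not_gt hi.2) (by positivity)
        linarith
    _ ≤ ∑ i ∈ (Trans t).filter (fun i => 0 < pr i), pr i * (q i t : ℤ) := by
        apply Finset.sum_le_sum_of_subset_of_nonneg
        · exact Finset.filter_subset_filter _ ht.2
        · intro i hi _
          rw [Finset.mem_filter] at hi
          exact mul_nonneg (le_of_lt hi.2) (by positivity)
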